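/- Let K ⊂ ℝⁿ be a compact convex o-symmetric body with nonempty interior, Λ ⊂ ℝⁿ a full-rank lattice, and Λ̄ ⊊ Λ a full-rank sublattice. Let m ∈ ℕ satisfy m · det Λ < det Λ̄. If vol((½K + Λ̄) ∩ P) ≥ m · det Λ, where P is a fundamental parallelepiped of Λ̄, then K contains at least m + 1 lattice points of Λ lying in pairwise different cosets of Λ modulo Λ̄. -/

import Mathlib

open MeasureTheory Set Pointwise
open Submodule
open scoped ENNReal

/-- The lattice generated by the vectors `b`. -/
noncomputable def lat {n : ℕ} (b : Fin n → (Fin n → ℝ)) : Set (Fin n → ℝ) :=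
  (Submodule.span ℤ (Set.range b) : Submodule ℤ (Fin n → ℝ))

/-- The determinant (covolume) of the lattice with basis `b`. -/
noncomputable def latDet {n : ℕ} (b : Fin n → (Fin n → ℝ)) : ℝ :=
  |(Matrix.of b).det|

/-- A compact convex `o`-symmetric body with nonempty interior. -/
def IsBody {n : ℕ} (K : Set (Fin n → ℝ)) : Prop :=
  IsCompact K ∧ Convex ℝ K ∧ K = -K ∧ (interior K).Nonempty

/-- First successive minimum of `K` w.r.t. the point set `S`. -/
noncomputable def lambda1 {n : ℕ} (K S : Set (Fin n → ℝ)) : ℝ :=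
  sInf {l : ℝ | 0 ≤ l ∧ ∃ x ∈ S, x ≠ 0 ∧ x ∈ l • K}

/-- First restricted successive minimum: smallest `l ≥ 0` with `l • K ∩ S ≠ ∅`. -/
noncomputable def lambdaRes {n : ℕ} (K S : Set (Fin n → ℝ)) : ℝ :=
  sInf {l : ℝ | 0 ≤ l ∧ (l • K ∩ S).Nonempty}

/-- `i`-th successive minimum of `K` w.r.t. the point set `S`. -/
noncomputable def lambdaI {n : ℕ} (i : ℕ) (K S : Set (Fin n → ℝ)) : ℝ :=
  sInf {l : ℝ | 0 ≤ l ∧ i ≤ Module.finrank ℝ (Submodule.span ℝ (l • K ∩ S))}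

/-- The (half-open) fundamental parallelepiped of the basis `b`. -/
noncomputable def fundPar {n : ℕ} (b : Fin n → (Fin n → ℝ)) : Set (Fin n → ℝ) :=
  {x | ∃ ρ : Fin n → ℝ, (∀ i, 0 ≤ ρ i ∧ ρ i < 1) ∧ x = ∑ i, ρ i • b i}

/-- The covering radius of `K` with respect to the point set `L`. -/
noncomputable def covRadius {n : ℕ} (K L : Set (Fin n → ℝ)) : ℝ :=
  sInf {μ : ℝ | 0 < μ ∧ ∀ t : Fin n → ℝ, (({t} + μ • K) ∩ L).Nonempty}

/-- the torus version of van der Corput's theorem. -/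
theorem fundPar_eq' {n : ℕ} (b : Fin n → (Fin n → ℝ)) (B : Module.Basis (Fin n) ℝ (Fin n → ℝ))
    (hBcoe : ⇑B = b) : fundPar b = ZSpan.fundamentalDomain B := by
  ext x
  simp only [fundPar, ZSpan.fundamentalDomain, mem_setOf_eq]
  constructor
  · rintro ⟨ρ, hρ, rfl⟩
    intro i
    rw [← hBcoe, Module.Basis.repr_sum_self]
    exact ⟨(hρ i).1, (hρ i).2⟩
  · intro h
    refine ⟨fun i => B.repr x i, fun i => ⟨(h i).1, (h i).2⟩, ?_⟩
    conv_lhs => rw [← B.sum_repr x]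
    simp [hBcoe]

open scoped Classical in
theorem closed_card_filter' {n : ℕ} {C : Set (Fin n → ℝ)} (hC : IsClosed C)
    (F : Finset (Fin n → ℝ)) (m : ℕ) :
    IsClosed {x : Fin n → ℝ | m ≤ (F.filter (fun c => x - c ∈ C)).card} := by
  have heq : {x : Fin n → ℝ | m ≤ (F.filter (fun c => x - c ∈ C)).card}
      = ⋃ T ∈ F.powersetCard m, ⋂ c ∈ T, {x | x - c ∈ C} := by
    ext x
    simp only [mem_setOf_eq, mem_iUnion, mem_iInter, Finset.mem_powersetCard, exists_prop]
    constructor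
    · intro hx
      obtain ⟨T, hT, hTcard⟩ := Finset.exists_subset_card_eq hx
      exact ⟨T, ⟨hT.trans (Finset.filter_subset _ _), hTcard⟩,
        fun c hc => (Finset.mem_filter.mp (hT hc)).2⟩
    · rintro ⟨T, ⟨hTF, hTcard⟩, hT⟩
      calc m = T.card := hTcard.symm
        _ ≤ _ := Finset.card_le_card (fun c hc => Finset.mem_filter.mpr ⟨hTF hc, hT c hc⟩)
  rw [heq]
  refine (F.powersetCard m).finite_toSet.isClosed_biUnion (fun T _ => ?_)
  exact isClosed_biInter (fun c _ => hC.preimage (continuous_id.sub continuous_const))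

theorem stmt5 {n : ℕ} (K : Set (Fin n → ℝ)) (hK : IsBody K)
    (b cbar : Fin n → (Fin n → ℝ)) (hb : LinearIndependent ℝ b)
    (hcbar : LinearIndependent ℝ cbar)
    (hsub : lat cbar ⊆ lat b) (hne : lat cbar ≠ lat b)
    (m : ℕ) (hm : (m : ℝ) * latDet b < latDet cbar)
    (hvol : (m : ℝ) * latDet b ≤
      (volume (((2⁻¹ : ℝ) • K + lat cbar) ∩ fundPar cbar)).toReal) :
    ∃ T : Finset (Fin n → ℝ), (T : Set (Fin n → ℝ)) ⊆ K ∩ lat b ∧ m + 1 ≤ T.card ∧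
      ∀ x ∈ T, ∀ y ∈ T, x ≠ y → x - y ∉ lat cbar := by
  classical
  -- dispatch n = 0
  rcases Nat.eq_zero_or_pos n with hn | hn
  · subst hn
    refine absurd ?_ hne
    have h0 : ∀ (v : Fin 0 → (Fin 0 → ℝ)), lat v = {0} := by
      intro v
      ext x
      have hx : x = 0 := Subsingleton.elim x 0
      subst hx
      simp [lat]
    rw [h0, h0]
  have : NeZero n := ⟨hn.ne'⟩
  have hnE : Nonempty (Fin n) := Fin.pos_iff_nonempty.mp hn
  -- instances for the lattice subtypes
  haveI hMV : MeasurableVAdd (span ℤ (Set.range cbar)) (Fin n → ℝ) := by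
    constructor
    · intro x
      exact measurable_subtype_coe.add_const x
  haveI hVI : VAddInvariantMeasure (span ℤ (Set.range cbar)) (Fin n → ℝ) volume := by
    constructor
    intro c s hs
    exact measure_preimage_add volume (c : Fin n → ℝ) s
  haveI hCnt : Countable (span ℤ (Set.range cbar)) := by
    have hsurj : Function.Surjective
        (fun z : Fin n → ℤ => (⟨∑ i, z i • cbar i, by
          exact Submodule.sum_smul_mem _ _ (fun i _ => Submodule.subset_span (mem_range_self i))⟩ :
          span ℤ (Set.range cbar))) := by
      rintro ⟨v, hv⟩
      obtain ⟨z, hz⟩ := (mem_span_range_iff_exists_fun ℤ).mp hv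
      exact ⟨z, Subtype.ext (by simpa using hz)⟩
    exact hsurj.countable
  -- bases
  let Bb : Module.Basis (Fin n) ℝ (Fin n → ℝ) :=
    basisOfLinearIndependentOfCardEqFinrank hb (by simp [Module.finrank_fin_fun])
  have hBb : ⇑Bb = b := coe_basisOfLinearIndependentOfCardEqFinrank hb _
  let Bc : Module.Basis (Fin n) ℝ (Fin n → ℝ) :=
    basisOfLinearIndependentOfCardEqFinrank hcbar (by simp [Module.finrank_fin_fun])
  have hBc : ⇑Bc = cbar := coe_basisOfLinearIndependentOfCardEqFinrank hcbar _
  set C : Set (Fin n → ℝ) := (2⁻¹ : ℝ) • K + lat cbar with hCdef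
  set D : Set (Fin n → ℝ) := ZSpan.fundamentalDomain Bb with hDdef
  set P : Set (Fin n → ℝ) := ZSpan.fundamentalDomain Bc with hPdef
  have hPeq : fundPar cbar = P := fundPar_eq' cbar Bc hBc
  have hvolD : volume D = ENNReal.ofReal (latDet b) := by
    rw [hDdef, ZSpan.volume_fundamentalDomain, latDet, hBb]
  have hvolP : volume P = ENNReal.ofReal (latDet cbar) := by
    rw [hPdef, ZSpan.volume_fundamentalDomain, latDet, hBc]
  have hdet : ∀ (v : Fin n → (Fin n → ℝ)), LinearIndependent ℝ v → 0 < latDet v := by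
    intro v hv
    rw [latDet, abs_pos]
    intro h0
    obtain ⟨w, hw, hw0⟩ := (Matrix.exists_vecMul_eq_zero_iff).mpr h0
    apply hw
    have hsum : ∑ i, w i • v i = 0 := by
      funext j
      have := congrFun hw0 j
      simpa [Matrix.vecMul, dotProduct, Finset.sum_apply, mul_comm] using this
    have hlin := Fintype.linearIndependent_iff.mp hv w hsum
    funext i
    exact hlin i
  have hdetb_pos : 0 < latDet b := hdet b hb
  have hdetc_pos : 0 < latDet cbar := hdet cbar hcbar
  -- unique representation in fundamental domains
  have hEUb : ∀ x : Fin n → ℝ, ∃! v : span ℤ (Set.range b), (v : Fin n → ℝ) + x ∈ D := by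
    intro x
    have := ZSpan.exist_unique_vadd_mem_fundamentalDomain Bb x
    rw [hBb] at this
    exact this
  have hEUc : ∀ x : Fin n → ℝ, ∃! v : span ℤ (Set.range cbar), (v : Fin n → ℝ) + x ∈ P := by
    intro x
    have := ZSpan.exist_unique_vadd_mem_fundamentalDomain Bc x
    rw [hBc] at this
    exact this
  have hPfund : IsAddFundamentalDomain (span ℤ (Set.range cbar)) P volume := by
    have := ZSpan.isAddFundamentalDomain Bc volume
    rw [hBc] at this
    exact this
  -- basic properties of K and C
  obtain ⟨hKcomp, hKconv, hKsymm, hKint⟩ := hK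
  have hKne : K.Nonempty := hKint.mono interior_subset
  have hKneg : ∀ a ∈ K, -a ∈ K := by
    intro a ha
    rw [hKsymm]
    simpa using ha
  have hhalf : ∀ a ∈ K, ∀ a' ∈ K, (2⁻¹ : ℝ) • a - (2⁻¹ : ℝ) • a' ∈ K := by
    intro a ha a' ha'
    have h2 : (2⁻¹ : ℝ) • a - (2⁻¹ : ℝ) • a' = (2⁻¹ : ℝ) • a + (2⁻¹ : ℝ) • (-a') := by
      rw [smul_neg]
      ring_nf
    rw [h2]
    exact hKconv ha (hKneg a' ha') (by norm_num) (by norm_num) (by norm_num)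
  have hlatclosed : IsClosed (lat cbar) := by
    haveI : DiscreteTopology (span ℤ (Set.range cbar)).toAddSubgroup := by
      have : DiscreteTopology (span ℤ (Set.range (⇑Bc))).toAddSubgroup := inferInstance
      rwa [hBc] at this
    exact AddSubgroup.isClosed_of_discrete (H := (span ℤ (Set.range cbar)).toAddSubgroup)
  have hCclosed : IsClosed C := by
    rw [hCdef]
    have h1 : IsCompact ((2⁻¹ : ℝ) • K) := hKcomp.smul _
    simpa using hlatclosed.vadd_left_of_isCompact h1
  have hCadd : ∀ x ∈ C, ∀ l ∈ lat cbar, x + l ∈ C := by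
    rintro x hx l hl
    rw [hCdef] at hx ⊢
    obtain ⟨k, hk, l', hl', rfl⟩ := mem_add.mp hx
    exact mem_add.mpr ⟨k, hk, l' + l, add_mem hl' hl, (add_assoc _ _ _).symm⟩
  have hCiff : ∀ l ∈ lat cbar, ∀ x, x + l ∈ C ↔ x ∈ C := by
    intro l hl x
    constructor
    · intro h
      have := hCadd _ h (-l) (neg_mem hl)
      simpa using this
    · intro h
      exact hCadd _ h _ hl
  have hCne : C.Nonempty := by
    obtain ⟨a, ha⟩ := hKne
    exact ⟨(2⁻¹ : ℝ) • a + 0, mem_add.mpr ⟨_, smul_mem_smul_set ha, 0, zero_mem _, rfl⟩⟩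
  -- the finite set of coset representatives
  have hRfinite : (fundPar cbar ∩ lat b).Finite := by
    haveI : DiscreteTopology (lat b) := by
      have : DiscreteTopology (span ℤ (Set.range (⇑Bb))) := inferInstance
      rw [hBb] at this
      exact this
    have hbd : Bornology.IsBounded (fundPar cbar) := by
      rw [hPeq, hPdef]
      exact ZSpan.fundamentalDomain_isBounded Bc
    have hcl : IsClosed (lat b) := by
      haveI : DiscreteTopology (span ℤ (Set.range b)).toAddSubgroup := by
        have : DiscreteTopology (span ℤ (Set.range (⇑Bb))).toAddSubgroup := inferInstance
        rwa [hBb] at this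
      exact AddSubgroup.isClosed_of_discrete (H := (span ℤ (Set.range b)).toAddSubgroup)
    exact Metric.finite_isBounded_inter_isClosed DiscreteTopology.isDiscrete hbd hcl
  set Rfin : Finset (Fin n → ℝ) := hRfinite.toFinset with hRdef
  have hRmem : ∀ c, c ∈ Rfin ↔ c ∈ fundPar cbar ∧ c ∈ lat b := by
    intro c
    rw [hRdef, Set.Finite.mem_toFinset]
    rfl
  have hRlat : ∀ c ∈ Rfin, c ∈ lat b := fun c hc => ((hRmem c).mp hc).2
  have hrep : ∀ y ∈ lat b, ∃ c, c ∈ Rfin ∧ y - c ∈ lat cbar := by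
    intro y hy
    obtain ⟨v, hv, -⟩ := hEUc y
    refine ⟨(v : Fin n → ℝ) + y, ?_, ?_⟩
    · rw [hRmem]
      constructor
      · rw [hPeq]
        exact hv
      · exact add_mem (hsub v.2) hy
    · have heq : y - ((v : Fin n → ℝ) + y) = -(v : Fin n → ℝ) := by abel
      rw [heq]
      exact neg_mem v.2
  have huniq : ∀ c ∈ Rfin, ∀ c' ∈ Rfin, c - c' ∈ lat cbar → c = c' := by
    intro c hc c' hc' hcc
    obtain ⟨v, -, hv2⟩ := hEUc c'
    have h1 : ((⟨c - c', hcc⟩ : span ℤ (Set.range cbar)) : Fin n → ℝ) + c' ∈ P := by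
      simpa using (hPeq ▸ ((hRmem c).mp hc).1 : c ∈ P)
    have h2 : ((0 : span ℤ (Set.range cbar)) : Fin n → ℝ) + c' ∈ P := by
      simpa using (hPeq ▸ ((hRmem c').mp hc').1 : c' ∈ P)
    have := (hv2 _ h1).trans (hv2 _ h2).symm
    have hcc0 : c - c' = 0 := by
      simpa using congrArg (Subtype.val) this
    have := sub_eq_zero.mp hcc0
    exact this
  -- chosen representative function
  choose! r hr using id hrep
  have hr1 : ∀ y ∈ lat b, r y ∈ Rfin := fun y hy => (hr y hy).1
  have hr2 : ∀ y ∈ lat b, y - r y ∈ lat cbar := fun y hy => (hr y hy).2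
  have hrchar : ∀ y ∈ lat b, ∀ c ∈ Rfin, y - c ∈ lat cbar → r y = c := by
    intro y hy c hc hyc
    refine huniq _ (hr1 y hy) _ hc ?_
    have h1 := hr2 y hy
    have heq : r y - c = (y - c) - (y - r y) := by abel
    rw [heq]
    exact sub_mem hyc h1
  -- DR : union of translates of D
  set DR : Set (Fin n → ℝ) := ⋃ c ∈ Rfin, (fun x => x + c) ⁻¹' D with hDRdef
  have hDmeas : MeasurableSet D := ZSpan.fundamentalDomain_measurableSet Bb
  have hPmeas : MeasurableSet P := ZSpan.fundamentalDomain_measurableSet Bc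
  have hDRmeas : MeasurableSet DR := by
    rw [hDRdef]
    refine Finset.measurableSet_biUnion Rfin (fun c _ => ?_)
    exact hDmeas.preimage (measurable_add_const c)
  have hDRfund : IsAddFundamentalDomain (span ℤ (Set.range cbar)) DR volume := by
    refine IsAddFundamentalDomain.mk' hDRmeas.nullMeasurableSet (fun x => ?_)
    obtain ⟨v, hv1, hv2⟩ := hEUb x
    obtain ⟨c, hcR, hcv⟩ := hrep (v : Fin n → ℝ) v.2
    refine ⟨⟨(v : Fin n → ℝ) - c, hcv⟩, ?_, ?_⟩
    · show ((v : Fin n → ℝ) - c) + x ∈ DR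
      rw [hDRdef]
      refine mem_biUnion hcR ?_
      show ((v : Fin n → ℝ) - c) + x + c ∈ D
      have heq : ((v : Fin n → ℝ) - c) + x + c = (v : Fin n → ℝ) + x := by abel
      rw [heq]
      exact hv1
    · rintro ⟨g, hg⟩ hgmem
      have : g + x ∈ DR := hgmem
      rw [hDRdef] at this
      obtain ⟨c', hc', hmem'⟩ := mem_iUnion₂.mp this
      have hmem'' : (g + c') + x ∈ D := by
        have heq : (g + c') + x = g + x + c' := by abel
        rw [heq]
        exact hmem'
      have hgc'lat : g + c' ∈ lat b := add_mem (hsub hg) (hRlat c' hc')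
      have huv : (⟨g + c', hgc'lat⟩ : span ℤ (Set.range b)) = v := hv2 _ hmem''
      have huv' : g + c' = (v : Fin n → ℝ) := congrArg Subtype.val huv
      have hcc' : c' = c := by
        refine huniq _ hc' _ hcR ?_
        have heq : c' - c = ((v : Fin n → ℝ) - c) - g := by
          rw [← huv']; abel
        rw [heq]
        exact sub_mem hcv hg
      apply Subtype.ext
      show g = (v : Fin n → ℝ) - c
      rw [← huv', hcc']
      abel
  have hCmeas : MeasurableSet C := hCclosed.measurableSet
  have step2 : volume (C ∩ P) = volume (C ∩ DR) := by
    refine hPfund.measure_set_eq hDRfund hCmeas ?_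
    intro g
    ext x
    simp only [mem_preimage]
    have heq : (g : span ℤ (Set.range cbar)) +ᵥ x = x + (g : Fin n → ℝ) := by
      show (g : Fin n → ℝ) + x = x + (g : Fin n → ℝ)
      abel
    rw [heq]
    exact hCiff _ g.2 x
  have step2b : volume (C ∩ DR) = ∑ c ∈ Rfin, volume ({y | y - c ∈ C} ∩ D) := by
    have hsplit : C ∩ DR = ⋃ c ∈ Rfin, (C ∩ (fun x => x + c) ⁻¹' D) := by
      rw [hDRdef, inter_iUnion₂]
    rw [hsplit]
    rw [measure_biUnion_finset ?hd ?hm]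
    case hd =>
      intro c hc c' hc' hcc'
      refine Set.disjoint_left.mpr (fun x hx hx' => ?_)
      obtain ⟨-, hx2⟩ := hx
      obtain ⟨-, hx2'⟩ := hx'
      apply hcc'
      simp only [Finset.coe_sort_coe, mem_preimage] at hx2 hx2'
      obtain ⟨v, -, hv2⟩ := hEUb x
      have h1 : ((⟨c, hRlat c (by simpa using hc)⟩ : span ℤ (Set.range b)) : Fin n → ℝ) + x ∈ D := by
        show c + x ∈ D
        rw [add_comm]
        exact hx2
      have h2 : ((⟨c', hRlat c' (by simpa using hc')⟩ : span ℤ (Set.range b)) : Fin n → ℝ) + x ∈ D := by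
        show c' + x ∈ D
        rw [add_comm]
        exact hx2'
      have := (hv2 _ h1).trans (hv2 _ h2).symm
      exact congrArg Subtype.val this
    case hm =>
      intro c _
      exact hCmeas.inter (hDmeas.preimage (measurable_add_const c))
    refine Finset.sum_congr rfl (fun c _ => ?_)
    have hpre : C ∩ (fun x => x + c) ⁻¹' D = (fun x => x + c) ⁻¹' ({y | y - c ∈ C} ∩ D) := by
      ext x
      simp only [mem_inter_iff, mem_preimage, mem_setOf_eq, add_sub_cancel_right]
    rw [hpre]
    exact measure_preimage_add_right volume c _
  set gfun : (Fin n → ℝ) → ℝ≥0∞ :=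
    fun x => ((Rfin.filter (fun c => x - c ∈ C)).card : ℝ≥0∞) with hgdef
  have hmemC_meas : ∀ c : Fin n → ℝ, MeasurableSet {y : Fin n → ℝ | y - c ∈ C} :=
    fun c => hCmeas.preimage (measurable_id.sub measurable_const)
  have hgsum : ∀ x, gfun x =
      ∑ c ∈ Rfin, Set.indicator {y | y - c ∈ C} (fun _ => (1 : ℝ≥0∞)) x := by
    intro x
    simp only [hgdef]
    rw [Finset.card_filter]
    push_cast
    refine Finset.sum_congr rfl (fun c _ => ?_)
    rw [Set.indicator_apply]
    simp only [mem_setOf_eq]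
  have hgmeas : Measurable gfun := by
    have : gfun = fun x => ∑ c ∈ Rfin, Set.indicator {y | y - c ∈ C} (fun _ => (1 : ℝ≥0∞)) x := by
      funext x
      exact hgsum x
    rw [this]
    exact Finset.measurable_sum _ (fun c _ => measurable_const.indicator (hmemC_meas c))
  have step3 : ∑ c ∈ Rfin, volume ({y | y - c ∈ C} ∩ D) = ∫⁻ x in D, gfun x := by
    have h1 : ∀ c ∈ Rfin, volume ({y : Fin n → ℝ | y - c ∈ C} ∩ D)
        = ∫⁻ x in D, Set.indicator {y | y - c ∈ C} (fun _ => (1 : ℝ≥0∞)) x := by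
      intro c _
      rw [lintegral_indicator (hmemC_meas c), setLIntegral_one,
        Measure.restrict_apply (hmemC_meas c)]
    rw [Finset.sum_congr rfl h1, ← lintegral_finset_sum]
    · exact lintegral_congr (fun x => (hgsum x).symm)
    · exact fun c _ => measurable_const.indicator (hmemC_meas c)
  have hvolPfin : volume (C ∩ P) ≠ ⊤ := by
    refine ne_top_of_le_ne_top ?_ (measure_mono inter_subset_right)
    rw [hvolP]
    exact ENNReal.ofReal_ne_top
  have hlow : ENNReal.ofReal ((m : ℝ) * latDet b) ≤ volume (C ∩ P) := by
    rw [hPeq] at hvol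
    exact ENNReal.ofReal_le_of_le_toReal hvol
  have hofReal : ENNReal.ofReal ((m : ℝ) * latDet b) = (m : ℝ≥0∞) * volume D := by
    rw [hvolD, ENNReal.ofReal_mul (by positivity), ENNReal.ofReal_natCast]
  have hMfin : (m : ℝ≥0∞) * volume D ≠ ⊤ := by
    rw [hvolD]
    exact ENNReal.mul_ne_top (ENNReal.natCast_ne_top m) ENNReal.ofReal_ne_top
  -- main existence of a point covered m+1 times
  have hexists : ∃ x : Fin n → ℝ, m + 1 ≤ (Rfin.filter (fun c => x - c ∈ C)).card := by
    by_contra hcon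
    push_neg at hcon
    have Hm : ∀ x : Fin n → ℝ, (Rfin.filter (fun c => x - c ∈ C)).card ≤ m :=
      fun x => Nat.lt_succ_iff.mp (hcon x)
    have hgle : ∀ x, gfun x ≤ (m : ℝ≥0∞) := by
      intro x
      rw [hgdef]
      exact_mod_cast Nat.cast_le.mpr (Hm x)
    have step4 : ∫⁻ x in D, gfun x ≤ (m : ℝ≥0∞) * volume D := by
      calc ∫⁻ x in D, gfun x ≤ ∫⁻ _ in D, (m : ℝ≥0∞) := lintegral_mono hgle
        _ = (m : ℝ≥0∞) * volume D := by rw [setLIntegral_const]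
    have hup : volume (C ∩ P) ≤ (m : ℝ≥0∞) * volume D := by
      rw [step2, step2b, step3]
      exact step4
    have hint_eq : ∫⁻ x in D, gfun x = (m : ℝ≥0∞) * volume D := by
      refine le_antisymm step4 ?_
      calc (m : ℝ≥0∞) * volume D = ENNReal.ofReal ((m : ℝ) * latDet b) := hofReal.symm
        _ ≤ volume (C ∩ P) := hlow
        _ = _ := by rw [step2, step2b, step3]
    have hCne_univ : C ≠ univ := by
      intro h
      have h1 : volume (C ∩ P) = ENNReal.ofReal (latDet cbar) := by
        rw [h, univ_inter, hvolP]
      have h2 : volume (C ∩ P) ≤ ENNReal.ofReal ((m : ℝ) * latDet b) := by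
        rw [hofReal]
        exact hup
      rw [h1] at h2
      have := (ENNReal.ofReal_le_ofReal_iff (by positivity)).mp h2
      linarith
    -- a.e. lower bound on D
    have hae : ∀ᵐ x, x ∈ D → (m : ℝ≥0∞) ≤ gfun x := by
      have hsubmeas : Measurable (fun x => (m : ℝ≥0∞) - gfun x) := measurable_const.sub hgmeas
      have hadd : (∫⁻ x in D, ((m : ℝ≥0∞) - gfun x)) + ∫⁻ x in D, gfun x
          = (m : ℝ≥0∞) * volume D := by
        have hpt : ∀ x, ((m : ℝ≥0∞) - gfun x) + gfun x = (m : ℝ≥0∞) :=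
          fun x => tsub_add_cancel_of_le (hgle x)
        have h1 : ∫⁻ x in D, (((m : ℝ≥0∞) - gfun x) + gfun x) = (m : ℝ≥0∞) * volume D := by
          rw [lintegral_congr hpt, setLIntegral_const]
        rw [← h1, lintegral_add_right _ hgmeas]
      have h0 : ∫⁻ x in D, ((m : ℝ≥0∞) - gfun x) = 0 := by
        rw [hint_eq] at hadd
        calc ∫⁻ x in D, ((m : ℝ≥0∞) - gfun x)
            = (∫⁻ x in D, ((m : ℝ≥0∞) - gfun x)) + ((m : ℝ≥0∞) * volume D)
              - ((m : ℝ≥0∞) * volume D) := (ENNReal.add_sub_cancel_right hMfin).symm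
          _ = ((m : ℝ≥0∞) * volume D) - ((m : ℝ≥0∞) * volume D) := by rw [hadd]
          _ = 0 := tsub_self _
      have haeD := (lintegral_eq_zero_iff hsubmeas).mp h0
      refine (ae_restrict_iff' hDmeas).mp ?_
      filter_upwards [haeD] with x hx
      exact tsub_eq_zero_iff_le.mp hx
    -- periodicity
    have hper : ∀ l ∈ lat b, ∀ x : Fin n → ℝ,
        (Rfin.filter (fun c => (x + l) - c ∈ C)).card
          = (Rfin.filter (fun c => x - c ∈ C)).card := by
      intro l hl x
      refine Finset.card_bij' (fun c _ => r (c - l)) (fun d _ => r (d + l)) ?_ ?_ ?_ ?_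
      · intro c hc
        obtain ⟨hcR, hcC⟩ := Finset.mem_filter.mp hc
        have hclat : c - l ∈ lat b := sub_mem (hRlat c hcR) hl
        refine Finset.mem_filter.mpr ⟨hr1 _ hclat, ?_⟩
        have heq : x - r (c - l) = ((x + l) - c) + ((c - l) - r (c - l)) := by abel
        rw [heq]
        exact hCadd _ hcC _ (hr2 _ hclat)
      · intro d hd
        obtain ⟨hdR, hdC⟩ := Finset.mem_filter.mp hd
        have hdlat : d + l ∈ lat b := add_mem (hRlat d hdR) hl
        refine Finset.mem_filter.mpr ⟨hr1 _ hdlat, ?_⟩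
        have heq : (x + l) - r (d + l) = (x - d) + ((d + l) - r (d + l)) := by abel
        rw [heq]
        exact hCadd _ hdC _ (hr2 _ hdlat)
      · intro c hc
        obtain ⟨hcR, -⟩ := Finset.mem_filter.mp hc
        have hclat : c - l ∈ lat b := sub_mem (hRlat c hcR) hl
        refine hrchar _ (add_mem (hRlat _ (hr1 _ hclat)) hl) _ hcR ?_
        have heq : (r (c - l) + l) - c = -((c - l) - r (c - l)) := by abel
        rw [heq]
        exact neg_mem (hr2 _ hclat)
      · intro d hd
        obtain ⟨hdR, -⟩ := Finset.mem_filter.mp hd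
        have hdlat : d + l ∈ lat b := add_mem (hRlat d hdR) hl
        refine hrchar _ (sub_mem (hRlat _ (hr1 _ hdlat)) hl) _ hdR ?_
        have heq : (r (d + l) - l) - d = -((d + l) - r (d + l)) := by abel
        rw [heq]
        exact neg_mem (hr2 _ hdlat)
    -- the good set is everything
    set Good : Set (Fin n → ℝ) :=
      {x : Fin n → ℝ | m ≤ (Rfin.filter (fun c => x - c ∈ C)).card} with hGdef
    have hGclosed : IsClosed Good := closed_card_filter' hCclosed Rfin m
    have hGDnull : volume (Goodᶜ ∩ D) = 0 := by
      have h1 : volume {x : Fin n → ℝ | ¬(x ∈ D → (m : ℝ≥0∞) ≤ gfun x)} = 0 := by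
        rw [← ae_iff]
        exact hae
      refine measure_mono_null ?_ h1
      intro x hx
      obtain ⟨hxG, hxD⟩ := hx
      simp only [mem_setOf_eq, not_forall]
      refine ⟨hxD, ?_⟩
      intro hmg
      apply hxG
      rw [hGdef]
      simp only [mem_setOf_eq]
      exact_mod_cast Nat.cast_le.mp hmg
    have hGnull : volume Goodᶜ = 0 := by
      have hGper : ∀ l ∈ lat b, ∀ x : Fin n → ℝ, x + l ∈ Good ↔ x ∈ Good := by
        intro l hl x
        rw [hGdef]
        simp only [mem_setOf_eq]
        rw [hper l hl x]
      have hcov : Goodᶜ ⊆ ⋃ z : Fin n → ℤ,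
          (Goodᶜ ∩ (fun x => x + ∑ i, z i • b i) ⁻¹' D) := by
        intro x hx
        obtain ⟨v, hv1, -⟩ := hEUb x
        obtain ⟨z, hz⟩ := (mem_span_range_iff_exists_fun ℤ).mp v.2
        refine mem_iUnion.mpr ⟨z, hx, ?_⟩
        show x + ∑ i, z i • b i ∈ D
        rw [hz, add_comm]
        exact hv1
      refine le_antisymm ?_ (by simp)
      calc volume Goodᶜ ≤ ∑' z : Fin n → ℤ,
            volume (Goodᶜ ∩ (fun x => x + ∑ i, z i • b i) ⁻¹' D) :=
          (measure_mono hcov).trans (measure_iUnion_le _)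
        _ = 0 := by
          rw [ENNReal.tsum_eq_zero]
          intro z
          have hzl : (∑ i, z i • b i) ∈ lat b :=
            Submodule.sum_smul_mem _ _ (fun i _ => Submodule.subset_span (mem_range_self i))
          have hpre : Goodᶜ ∩ (fun x => x + ∑ i, z i • b i) ⁻¹' D
              = (fun x => x + ∑ i, z i • b i) ⁻¹' (Goodᶜ ∩ D) := by
            ext x
            simp only [mem_inter_iff, mem_preimage, mem_compl_iff]
            constructor
            · rintro ⟨h1, h2⟩
              refine ⟨fun hG => h1 ?_, h2⟩
              exact (hGper _ hzl x).mp hG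
            · rintro ⟨h1, h2⟩
              refine ⟨fun hG => h1 ?_, h2⟩
              exact (hGper _ hzl x).mpr hG
          rw [hpre, measure_preimage_add_right volume _ _, hGDnull]
    have hGood : ∀ x : Fin n → ℝ, m ≤ (Rfin.filter (fun c => x - c ∈ C)).card := by
      have hempty : Goodᶜ = ∅ := hGclosed.isOpen_compl.eq_empty_of_measure_zero hGnull
      intro x
      have : x ∈ Good := by
        by_contra hxG
        rw [← mem_compl_iff, hempty] at hxG
        exact hxG
      exact this
    -- boundary point
    obtain ⟨x0, hx0C, hx0cl⟩ : ∃ x, x ∈ C ∧ x ∈ closure Cᶜ := by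
      have hfr : (frontier C).Nonempty := by
        by_contra hemp
        rw [not_nonempty_iff_eq_empty] at hemp
        have hclopen : IsClopen C := isClopen_iff_frontier_eq_empty.mpr hemp
        rcases isClopen_iff.mp hclopen with h | h
        · exact hCne.ne_empty h
        · exact hCne_univ h
      obtain ⟨x, hx⟩ := hfr
      rw [frontier_eq_closure_inter_closure] at hx
      exact ⟨x, hCclosed.closure_eq ▸ hx.1, hx.2⟩
    set F' : Finset (Fin n → ℝ) := Rfin.filter (fun c => c ∉ lat cbar) with hF'def
    set Good' : Set (Fin n → ℝ) :=
      {x : Fin n → ℝ | m ≤ (F'.filter (fun c => x - c ∈ C)).card} with hG'def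
    have hG'closed : IsClosed Good' := closed_card_filter' hCclosed F' m
    have hCcGood' : Cᶜ ⊆ Good' := by
      intro y hy
      rw [hG'def]
      simp only [mem_setOf_eq]
      have hsubf : Rfin.filter (fun c => y - c ∈ C) ⊆ F'.filter (fun c => y - c ∈ C) := by
        intro c hc
        obtain ⟨hcR, hcC⟩ := Finset.mem_filter.mp hc
        refine Finset.mem_filter.mpr ⟨?_, hcC⟩
        rw [hF'def]
        refine Finset.mem_filter.mpr ⟨hcR, ?_⟩
        intro hclat
        apply hy
        have heq : y = (y - c) + c := by abel
        rw [heq]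
        exact hCadd _ hcC _ hclat
      exact le_trans (hGood y) (Finset.card_le_card hsubf)
    have hx0G' : x0 ∈ Good' := by
      have : closure Cᶜ ⊆ Good' := closure_minimal hCcGood' hG'closed
      exact this hx0cl
    -- now overcount at x0
    have hr0R : r 0 ∈ Rfin := hr1 0 (zero_mem _)
    have hr0lat : r 0 ∈ lat cbar := by
      have := hr2 0 (zero_mem _)
      have heq : -((0 : Fin n → ℝ) - r 0) = r 0 := by abel
      rw [← heq]
      exact neg_mem this
    have hinsert : insert (r 0) (F'.filter (fun c => x0 - c ∈ C))
        ⊆ Rfin.filter (fun c => x0 - c ∈ C) := by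
      intro c hc
      rcases Finset.mem_insert.mp hc with h | h
      · subst h
        refine Finset.mem_filter.mpr ⟨hr0R, ?_⟩
        have heq : x0 - r 0 = x0 + (-(r 0)) := by abel
        rw [heq]
        exact hCadd _ hx0C _ (neg_mem hr0lat)
      · obtain ⟨hcF, hcC⟩ := Finset.mem_filter.mp h
        refine Finset.mem_filter.mpr ⟨?_, hcC⟩
        rw [hF'def] at hcF
        exact (Finset.mem_filter.mp hcF).1
    have hnotmem : r 0 ∉ F'.filter (fun c => x0 - c ∈ C) := by
      intro hmem
      have := Finset.mem_filter.mp hmem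
      have := Finset.mem_filter.mp this.1
      exact this.2 hr0lat
    have hcard : m + 1 ≤ (Rfin.filter (fun c => x0 - c ∈ C)).card := by
      calc m + 1 ≤ (F'.filter (fun c => x0 - c ∈ C)).card + 1 := by
            have := hx0G'
            rw [hG'def] at this
            simp only [mem_setOf_eq] at this
            omega
        _ = (insert (r 0) (F'.filter (fun c => x0 - c ∈ C))).card :=
            (Finset.card_insert_of_notMem hnotmem).symm
        _ ≤ _ := Finset.card_le_card hinsert
    exact absurd (Hm x0) (by omega)
  -- extraction of the lattice points
  obtain ⟨x, hx⟩ := hexists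
  obtain ⟨F', hF'sub, hF'card⟩ := Finset.exists_subset_card_eq hx
  have hF'mem : ∀ c ∈ F', c ∈ Rfin ∧ x - c ∈ C :=
    fun c hc => Finset.mem_filter.mp (hF'sub hc)
  have hdecomp : ∀ c ∈ F', ∃ k, k ∈ K ∧ ∃ l, l ∈ lat cbar ∧ x - c = (2⁻¹ : ℝ) • k + l := by
    intro c hc
    obtain ⟨k2, hk2, l, hl, heq⟩ := mem_add.mp (hF'mem c hc).2
    obtain ⟨k, hk, rfl⟩ := hk2
    exact ⟨k, hk, l, hl, heq.symm⟩
  choose! kf hkf lf hlf heqf using hdecomp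
  have hF'ne : F'.Nonempty := Finset.card_pos.mp (by rw [hF'card]; omega)
  obtain ⟨c₀, hc₀⟩ := hF'ne
  have hdiff : ∀ c ∈ F', ∀ c' ∈ F',
      (2⁻¹ : ℝ) • kf c - (2⁻¹ : ℝ) • kf c' = (c' - c) + (lf c' - lf c) := by
    intro c hc c' hc'
    have e1 : (2⁻¹ : ℝ) • kf c = (x - c) - lf c := eq_sub_of_add_eq (heqf c hc).symm
    have e2 : (2⁻¹ : ℝ) • kf c' = (x - c') - lf c' := eq_sub_of_add_eq (heqf c' hc').symm
    rw [e1, e2]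
    abel
  have hdifflat : ∀ c ∈ F', ∀ c' ∈ F',
      (2⁻¹ : ℝ) • kf c - (2⁻¹ : ℝ) • kf c' ∈ lat b := by
    intro c hc c' hc'
    rw [hdiff c hc c' hc']
    exact add_mem (sub_mem (hRlat _ (hF'mem c' hc').1) (hRlat _ (hF'mem c hc).1))
      (sub_mem (hsub (hlf c' hc')) (hsub (hlf c hc)))
  have hdiffnot : ∀ c ∈ F', ∀ c' ∈ F', c ≠ c' →
      ((2⁻¹ : ℝ) • kf c - (2⁻¹ : ℝ) • kf c') ∉ lat cbar := by
    intro c hc c' hc' hne' hmem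
    rw [hdiff c hc c' hc'] at hmem
    have hcc' : c' - c ∈ lat cbar := by
      have heq : c' - c = ((c' - c) + (lf c' - lf c)) - (lf c' - lf c) := by abel
      rw [heq]
      exact sub_mem hmem (sub_mem (hlf c' hc') (hlf c hc))
    exact hne' (huniq _ (hF'mem c' hc').1 _ (hF'mem c hc).1 hcc').symm
  have hinj : Set.InjOn (fun c => (2⁻¹ : ℝ) • kf c - (2⁻¹ : ℝ) • kf c₀) F' := by
    intro c hc c' hc' heq0
    have heq : (2⁻¹ : ℝ) • kf c - (2⁻¹ : ℝ) • kf c₀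
        = (2⁻¹ : ℝ) • kf c' - (2⁻¹ : ℝ) • kf c₀ := heq0
    by_contra hne'
    apply hdiffnot c (by exact_mod_cast hc) c' (by exact_mod_cast hc') hne'
    have heq2 : (2⁻¹ : ℝ) • kf c - (2⁻¹ : ℝ) • kf c'
        = ((2⁻¹ : ℝ) • kf c - (2⁻¹ : ℝ) • kf c₀) - ((2⁻¹ : ℝ) • kf c' - (2⁻¹ : ℝ) • kf c₀) := by
      abel
    rw [heq2, heq, sub_self]
    exact zero_mem _
  refine ⟨F'.image (fun c => (2⁻¹ : ℝ) • kf c - (2⁻¹ : ℝ) • kf c₀), ?_, ?_, ?_⟩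
  · intro y hy
    simp only [Finset.coe_image, mem_image, Finset.mem_coe] at hy
    obtain ⟨c, hc, rfl⟩ := hy
    constructor
    · exact hhalf _ (hkf c hc) _ (hkf c₀ hc₀)
    · exact hdifflat c hc c₀ hc₀
  · rw [Finset.card_image_of_injOn hinj, hF'card]
  · intro u hu v hv huv hmem
    simp only [Finset.mem_image] at hu hv
    obtain ⟨c, hc, rfl⟩ := hu
    obtain ⟨c', hc', rfl⟩ := hv
    have hne' : c ≠ c' := by
      rintro rfl
      exact huv rfl
    apply hdiffnot c hc c' hc' hne'
    have heq2 : (2⁻¹ : ℝ) • kf c - (2⁻¹ : ℝ) • kf c'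
        = ((2⁻¹ : ℝ) • kf c - (2⁻¹ : ℝ) • kf c₀) - ((2⁻¹ : ℝ) • kf c' - (2⁻¹ : ℝ) • kf c₀) := by
      abel
    rw [heq2]
    exact hmem
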